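/- Define η_A(p,q) = exp(A²|q|²/2 - A|p|) for (p,q) ∈ ℝ² × ℝ^{n-2}, p ≠ 0. In suitable orthonormal coordinates (with one direction along p/|p|), the Hessian satisfies (A²η_A)⁻¹D²η_A = diag(-(A|p|)⁻¹, 1, ..., 1) + O(A⁻²) on the region {|q| < A⁻³, |p| ≥ ε₁/4}; in particular, for A large D²η_A has exactly one negative eigenvalue γ₁ and the others positive, with γ₁ ≥ -λγ₂ for any fixed λ > 0 once A is large enough. -/

import Mathlib

/-- `η_A(p,q) = exp(A²|q|²/2 - A|p|)` on `ℝ² × ℝ^{n-2}` (here `m = n - 2`). -/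
noncomputable def etaA (m : ℕ) (A : ℝ) (x : (ℝ × ℝ) × EuclideanSpace ℝ (Fin m)) : ℝ :=
  Real.exp (A ^ 2 * ‖x.2‖ ^ 2 / 2 - A * Real.sqrt (x.1.1 ^ 2 + x.1.2 ^ 2))

/-- second derivative of `f` at `x` as a bilinear form evaluated at `(v, w)`. -/
noncomputable def D2 (m : ℕ) (f : (ℝ × ℝ) × EuclideanSpace ℝ (Fin m) → ℝ)
    (x v w : (ℝ × ℝ) × EuclideanSpace ℝ (Fin m)) : ℝ :=
  fderiv ℝ (fun y => fderiv ℝ f y v) x w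

namespace S9

abbrev E (m : ℕ) := EuclideanSpace ℝ (Fin m)
abbrev X (m : ℕ) := (ℝ × ℝ) × E m

noncomputable def π1 (m : ℕ) : X m →L[ℝ] ℝ :=
  (ContinuousLinearMap.fst ℝ ℝ ℝ).comp (ContinuousLinearMap.fst ℝ (ℝ×ℝ) (E m))
noncomputable def π2 (m : ℕ) : X m →L[ℝ] ℝ :=
  (ContinuousLinearMap.snd ℝ ℝ ℝ).comp (ContinuousLinearMap.fst ℝ (ℝ×ℝ) (E m))
noncomputable def πE (m : ℕ) : X m →L[ℝ] E m := ContinuousLinearMap.snd ℝ (ℝ×ℝ) (E m)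

@[simp] lemma π1_apply {m : ℕ} (u : X m) : π1 m u = u.1.1 := rfl
@[simp] lemma π2_apply {m : ℕ} (u : X m) : π2 m u = u.1.2 := rfl
@[simp] lemma πE_apply {m : ℕ} (u : X m) : πE m u = u.2 := rfl

/-- LG: the first derivative CLM of the exponent (and of log etaA). -/
noncomputable def LG (m : ℕ) (A : ℝ) (y : X m) : X m →L[ℝ] ℝ :=
  (A^2/2) • (2 • (innerSL ℝ y.2).comp (πE m))
  - A • ((1/(2*Real.sqrt (y.1.1^2+y.1.2^2))) • ((2 * y.1.1) • π1 m + (2 * y.1.2) • π2 m))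

noncomputable def dgf (m : ℕ) (A : ℝ) (x u : X m) : ℝ :=
  A^2 * (inner ℝ x.2 u.2 : ℝ) - A * (x.1.1*u.1.1 + x.1.2*u.1.2) / Real.sqrt (x.1.1^2+x.1.2^2)

lemma LG_apply {m : ℕ} (A : ℝ) (y u : X m) : LG m A y u = dgf m A y u := by
  simp only [LG, dgf, ContinuousLinearMap.sub_apply, ContinuousLinearMap.smul_apply,
    ContinuousLinearMap.add_apply, ContinuousLinearMap.comp_apply, innerSL_apply_apply, πE_apply,
    π1_apply, π2_apply, smul_eq_mul, pow_one, Nat.cast_ofNat, nsmul_eq_mul]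
  rcases eq_or_ne (Real.sqrt (y.1.1^2+y.1.2^2)) 0 with h|h
  · rw [h]; ring_nf
  · field_simp

end S9

namespace S9

lemma hasFDerivAt_g0 {m : ℕ} (A : ℝ) {y : X m} (hy : y.1.1^2 + y.1.2^2 ≠ 0) :
    HasFDerivAt (fun y : X m => A^2/2 * ‖y.2‖^2 - A * Real.sqrt (y.1.1^2+y.1.2^2))
      (LG m A y) y := by
  have h1 : HasFDerivAt (fun y : X m => ‖y.2‖^2)
      (2 • (innerSL ℝ y.2).comp (πE m)) y := by
    exact (hasFDerivAt_snd).norm_sq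
  have hsq : HasFDerivAt (fun y : X m => y.1.1^2 + y.1.2^2)
      (((2 * y.1.1) • π1 m) + ((2 * y.1.2) • π2 m)) y := by
    have h1 := ((π1 m).hasFDerivAt (x := y)).mul ((π1 m).hasFDerivAt (x := y))
    have h2 := ((π2 m).hasFDerivAt (x := y)).mul ((π2 m).hasFDerivAt (x := y))
    have h := h1.add h2
    have hfun : (⇑(π1 m) * ⇑(π1 m) + ⇑(π2 m) * ⇑(π2 m))
        = fun y : X m => y.1.1^2 + y.1.2^2 := by
      funext z; simp [pow_two]
    rw [hfun] at h
    refine h.congr_fderiv ?_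
    ext u <;> simp <;> ring
  have h2 := hsq.sqrt hy
  exact (h1.const_mul (A^2/2)).sub (h2.const_mul A)

lemma etaA_eq {m : ℕ} (A : ℝ) :
    etaA m A = fun y : X m => Real.exp (A^2/2 * ‖y.2‖^2 - A * Real.sqrt (y.1.1^2+y.1.2^2)) := by
  funext y; unfold etaA; ring_nf

lemma hasFDerivAt_etaA {m : ℕ} (A : ℝ) {y : X m} (hy : y.1.1^2 + y.1.2^2 ≠ 0) :
    HasFDerivAt (etaA m A) (etaA m A y • LG m A y) y := by
  rw [etaA_eq]
  have := (Real.hasDerivAt_exp (A^2/2 * ‖y.2‖^2 - A * Real.sqrt (y.1.1^2+y.1.2^2))).comp_hasFDerivAt y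
    (hasFDerivAt_g0 A hy)
  exact this

end S9

namespace S9

noncomputable def hgf (m : ℕ) (A : ℝ) (x v w : X m) : ℝ :=
  A^2 * (inner ℝ v.2 w.2 : ℝ) - A * (v.1.1*w.1.1 + v.1.2*w.1.2) / Real.sqrt (x.1.1^2+x.1.2^2)
  + A * (x.1.1*v.1.1 + x.1.2*v.1.2) * (x.1.1*w.1.1 + x.1.2*w.1.2) / (Real.sqrt (x.1.1^2+x.1.2^2))^3

lemma hasFDerivAt_sR {m : ℕ} {y : X m} (hy : y.1.1^2 + y.1.2^2 ≠ 0) :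
    HasFDerivAt (fun y : X m => Real.sqrt (y.1.1^2+y.1.2^2))
      ((1/(2*Real.sqrt (y.1.1^2+y.1.2^2))) • ((2 * y.1.1) • π1 m + (2 * y.1.2) • π2 m)) y := by
  have hsq : HasFDerivAt (fun y : X m => y.1.1^2 + y.1.2^2)
      (((2 * y.1.1) • π1 m) + ((2 * y.1.2) • π2 m)) y := by
    have h1 := ((π1 m).hasFDerivAt (x := y)).mul ((π1 m).hasFDerivAt (x := y))
    have h2 := ((π2 m).hasFDerivAt (x := y)).mul ((π2 m).hasFDerivAt (x := y))
    have h := h1.add h2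
    have hfun : (⇑(π1 m) * ⇑(π1 m) + ⇑(π2 m) * ⇑(π2 m))
        = fun y : X m => y.1.1^2 + y.1.2^2 := by
      funext z; simp [pow_two]
    rw [hfun] at h
    refine h.congr_fderiv ?_
    ext u <;> simp <;> ring
  exact hsq.sqrt hy

lemma sqrt_ne {m : ℕ} {x : X m} (hx : x.1.1^2 + x.1.2^2 ≠ 0) :
    Real.sqrt (x.1.1^2+x.1.2^2) ≠ 0 := by
  have h0 : 0 ≤ x.1.1^2 + x.1.2^2 := by positivity
  simpa [Real.sqrt_eq_zero h0] using hx

set_option maxHeartbeats 2000000 in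
lemma key {m : ℕ} (A : ℝ) {x : X m} (hx : x.1.1^2 + x.1.2^2 ≠ 0) (v w : X m) :
    D2 m (etaA m A) x v w = etaA m A x * (dgf m A x v * dgf m A x w + hgf m A x v w) := by
  have hsne := sqrt_ne hx
  have hU : IsOpen {y : X m | y.1.1^2 + y.1.2^2 ≠ 0} := by
    have hc : Continuous fun y : X m => y.1.1^2+y.1.2^2 := by fun_prop
    exact IsOpen.preimage hc isOpen_compl_singleton
  have h1 : (fun y => fderiv ℝ (etaA m A) y v) =ᶠ[nhds x]
      (fun y => etaA m A y * dgf m A y v) := by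
    filter_upwards [hU.mem_nhds hx] with y hy
    rw [(hasFDerivAt_etaA A hy).fderiv]
    simp [LG_apply]
  have h2 : D2 m (etaA m A) x v w = fderiv ℝ (fun y => etaA m A y * dgf m A y v) x w := by
    unfold D2; rw [h1.fderiv_eq]
  have hA' : HasFDerivAt (fun y : X m => (inner ℝ y.2 v.2 : ℝ)) ((innerSL ℝ v.2).comp (πE m)) x := by
    have h := ((innerSL ℝ v.2).comp (πE m)).hasFDerivAt (x := x)
    exact h.congr_of_eventuallyEq (Filter.Eventually.of_forall fun y => by
      simp only [ContinuousLinearMap.comp_apply, innerSL_apply_apply, πE_apply]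
      exact real_inner_comm _ _)
  have hB' := (((π1 m).hasFDerivAt (x := x)).mul_const v.1.1).add
    (((π2 m).hasFDerivAt (x := x)).mul_const v.1.2)
  have hinv := (hasDerivAt_inv hsne).comp_hasFDerivAt x (hasFDerivAt_sR (m := m) hx)
  have hd0 := (hA'.const_mul (A^2)).sub ((hB'.mul hinv).const_mul A)
  have hd : HasFDerivAt (fun y => dgf m A y v) _ x :=
    hd0.congr_of_eventuallyEq (Filter.Eventually.of_forall fun y => by
      simp only [dgf, π1_apply, π2_apply, div_eq_mul_inv, Function.comp, Pi.sub_apply, Pi.mul_apply, Pi.add_apply]; ring)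
  have hF := (hasFDerivAt_etaA A hx).mul hd
  rw [h2, show (fun y => etaA m A y * dgf m A y v) = (etaA m A * fun y => dgf m A y v) from rfl, hF.fderiv]
  simp only [ContinuousLinearMap.add_apply, ContinuousLinearMap.smul_apply,
    ContinuousLinearMap.sub_apply, ContinuousLinearMap.comp_apply, innerSL_apply_apply,
    πE_apply, π1_apply, π2_apply, smul_eq_mul, nsmul_eq_mul, ContinuousLinearMap.neg_apply,
    LG, Nat.cast_ofNat, Function.comp, Pi.add_apply]
  simp only [dgf, hgf]
  generalize hS : Real.sqrt (x.1.1^2+x.1.2^2) = s at hsne ⊢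
  field_simp
  ring
end S9

namespace S9

lemma etaA_ne {m : ℕ} (A : ℝ) (x : X m) : etaA m A x ≠ 0 := by
  unfold etaA; positivity

lemma Bval {m : ℕ} {A : ℝ} (hA : A ≠ 0) {p : ℝ × ℝ} {q : E m} (hp : p.1^2 + p.2^2 ≠ 0)
    (u u' : X m) :
    (A^2 * etaA m A (p,q))⁻¹ * D2 m (etaA m A) (p,q) u u'
      = (dgf m A (p,q) u * dgf m A (p,q) u' + hgf m A (p,q) u u') / A^2 := by
  rw [key A hp u u']
  have h := etaA_ne A ((p,q) : X m)
  field_simp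

lemma sum_single_apply {m : ℕ} (b : Fin m → ℝ) (j : Fin m) :
    (∑ i, b i • EuclideanSpace.single i (1:ℝ)) j = b j := by
  classical
  have : (∑ i, b i • EuclideanSpace.single i (1:ℝ)) j
      = ∑ i, (b i • EuclideanSpace.single i (1:ℝ)) j := by
    rw [WithLp.ofLp_sum, Finset.sum_apply]
  rw [this]
  simp [EuclideanSpace.single_apply]

lemma abs_coord_le {m : ℕ} (q : E m) (i : Fin m) : |q i| ≤ ‖q‖ := by
  rw [EuclideanSpace.norm_eq]
  have h1 : |q i| = Real.sqrt (‖q i‖^2) := by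
    rw [Real.sqrt_sq_eq_abs]; simp
  rw [h1]
  apply Real.sqrt_le_sqrt
  have : ‖q i‖^2 = ∑ j ∈ ({i} : Finset (Fin m)), ‖q j‖^2 := by simp
  rw [this]
  exact Finset.sum_le_sum_of_subset_of_nonneg (Finset.subset_univ _)
    (fun j _ _ => by positivity)

end S9

set_option maxHeartbeats 2000000 in
/-- In coordinates adapted to `p`, `(A²η_A)⁻¹D²η_A = diag(-(A|p|)⁻¹, 1, ..., 1) + O(A⁻²)` on
`{|q| < A⁻³, |p| ≥ ε₁/4}`; in particular for `A` large `D²η_A` has one negative eigenvalue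
`γ₁` and the rest positive, with `γ₁ ≥ -λγ₂`. -/
theorem stmt9 (m : ℕ) (ε₁ lam : ℝ) (hε : 0 < ε₁) (hlam : 0 < lam) :
    ∃ A₀ C : ℝ, 0 < A₀ ∧ 0 < C ∧
      ∀ A : ℝ, A₀ ≤ A → ∀ (p : ℝ × ℝ) (q : EuclideanSpace ℝ (Fin m)),
        ‖q‖ < (A ^ 3)⁻¹ → ε₁ / 4 ≤ Real.sqrt (p.1 ^ 2 + p.2 ^ 2) →
        let r := Real.sqrt (p.1 ^ 2 + p.2 ^ 2)
        let x : (ℝ × ℝ) × EuclideanSpace ℝ (Fin m) := (p, q)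
        let e1 : (ℝ × ℝ) × EuclideanSpace ℝ (Fin m) := ((-p.2 / r, p.1 / r), 0)
        let e2 : (ℝ × ℝ) × EuclideanSpace ℝ (Fin m) := ((p.1 / r, p.2 / r), 0)
        let eqv : Fin m → (ℝ × ℝ) × EuclideanSpace ℝ (Fin m) :=
          fun i => ((0, 0), EuclideanSpace.single i 1)
        let B : (ℝ × ℝ) × EuclideanSpace ℝ (Fin m) →
            (ℝ × ℝ) × EuclideanSpace ℝ (Fin m) → ℝ :=
          fun v w' => (A ^ 2 * etaA m A x)⁻¹ * D2 m (etaA m A) x v w'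
        (|B e1 e1 - (-(A * r)⁻¹)| ≤ C / A ^ 2) ∧
        (|B e2 e2 - 1| ≤ C / A ^ 2) ∧
        (∀ i, |B (eqv i) (eqv i) - 1| ≤ C / A ^ 2) ∧
        (|B e1 e2| ≤ C / A ^ 2) ∧
        (∀ i, |B e1 (eqv i)| ≤ C / A ^ 2) ∧
        (∀ i, |B e2 (eqv i)| ≤ C / A ^ 2) ∧
        (∀ i j, i ≠ j → |B (eqv i) (eqv j)| ≤ C / A ^ 2) ∧
        B e1 e1 < 0 ∧
        (∀ (a : ℝ) (b : Fin m → ℝ), a ^ 2 + ∑ i, b i ^ 2 = 1 →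
          0 < B (a • e2 + ∑ i, b i • eqv i) (a • e2 + ∑ i, b i • eqv i) ∧
          -lam * B (a • e2 + ∑ i, b i • eqv i) (a • e2 + ∑ i, b i • eqv i) ≤ B e1 e1) := by
  refine ⟨2 + 8/(lam*ε₁), 1, by positivity, one_pos, ?_⟩
  intro A hA0 p q hq hrge
  intro r x e1 e2 eqv B
  have hA8 : 8/(lam*ε₁) ≤ A := by
    have : (0:ℝ) < 8/(lam*ε₁) := by positivity
    linarith
  have hA2 : (2:ℝ) ≤ A := by
    have : (0:ℝ) < 8/(lam*ε₁) := by positivity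
    linarith
  have hApos : (0:ℝ) < A := by linarith
  have hAne : A ≠ 0 := ne_of_gt hApos
  have hr0 : 0 < r := lt_of_lt_of_le (by positivity) hrge
  have hrne : r ≠ 0 := ne_of_gt hr0
  have hrr : r^2 = p.1^2 + p.2^2 := Real.sq_sqrt (by positivity)
  have hp : p.1^2 + p.2^2 ≠ 0 := by nlinarith
  have hrdef : Real.sqrt (p.1^2 + p.2^2) = r := rfl
  have hq' : ‖q‖ ≤ (A^3)⁻¹ := le_of_lt hq
  have hqi : ∀ i, |q i| ≤ (A^3)⁻¹ := fun i => le_trans (S9.abs_coord_le q i) hq'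
  -- unfold the lets
  simp only [show B = fun v w' => (A ^ 2 * etaA m A x)⁻¹ * D2 m (etaA m A) x v w' from rfl,
    show x = ((p, q) : S9.X m) from rfl,
    show e1 = (((-p.2 / r, p.1 / r), 0) : S9.X m) from rfl,
    show e2 = (((p.1 / r, p.2 / r), 0) : S9.X m) from rfl,
    show eqv = fun i => (((0, 0), EuclideanSpace.single i 1) : S9.X m) from rfl]
  have hBval : ∀ u u' : S9.X m, (A ^ 2 * etaA m A ((p,q) : S9.X m))⁻¹ * D2 m (etaA m A) (p,q) u u'
      = (S9.dgf m A (p,q) u * S9.dgf m A (p,q) u' + S9.hgf m A (p,q) u u') / A^2 :=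
    fun u u' => S9.Bval hAne hp u u'
  -- dgf values
  have d1 : S9.dgf m A (p,q) (((-p.2 / r, p.1 / r), 0) : S9.X m) = 0 := by
    simp only [S9.dgf, inner_zero_right, hrdef]
    ring
  have d2 : S9.dgf m A (p,q) (((p.1 / r, p.2 / r), 0) : S9.X m) = -A := by
    simp only [S9.dgf, inner_zero_right, hrdef]
    field_simp
    linear_combination hrr
  have dq : ∀ i, S9.dgf m A (p,q) ((((0:ℝ), (0:ℝ)), EuclideanSpace.single i 1) : S9.X m)
      = A^2 * q i := by
    intro i
    simp only [S9.dgf, hrdef]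
    rw [EuclideanSpace.inner_single_right]
    simp
  -- hgf values
  have h11 : S9.hgf m A (p,q) (((-p.2 / r, p.1 / r), 0) : S9.X m)
      (((-p.2 / r, p.1 / r), 0) : S9.X m) = -(A/r) := by
    simp only [S9.hgf, inner_zero_right, hrdef]
    field_simp
    linear_combination r^2 * hrr
  have h22 : S9.hgf m A (p,q) (((p.1 / r, p.2 / r), 0) : S9.X m)
      (((p.1 / r, p.2 / r), 0) : S9.X m) = 0 := by
    simp only [S9.hgf, inner_zero_right, hrdef]
    field_simp
    linear_combination (-A*(p.1^2+p.2^2)) * hrr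
  have h12 : S9.hgf m A (p,q) (((-p.2 / r, p.1 / r), 0) : S9.X m)
      (((p.1 / r, p.2 / r), 0) : S9.X m) = 0 := by
    simp only [S9.hgf, inner_zero_right, hrdef]
    field_simp
    ring
  have h1q : ∀ i, S9.hgf m A (p,q) (((-p.2 / r, p.1 / r), 0) : S9.X m)
      ((((0:ℝ), (0:ℝ)), EuclideanSpace.single i 1) : S9.X m) = 0 := by
    intro i
    simp only [S9.hgf, inner_zero_left, hrdef]
    ring
  have h2q : ∀ i, S9.hgf m A (p,q) (((p.1 / r, p.2 / r), 0) : S9.X m)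
      ((((0:ℝ), (0:ℝ)), EuclideanSpace.single i 1) : S9.X m) = 0 := by
    intro i
    simp only [S9.hgf, inner_zero_left, hrdef]
    ring
  have hqq : ∀ i j, S9.hgf m A (p,q) ((((0:ℝ), (0:ℝ)), EuclideanSpace.single i 1) : S9.X m)
      ((((0:ℝ), (0:ℝ)), EuclideanSpace.single j 1) : S9.X m)
      = A^2 * (if i = j then (1:ℝ) else 0) := by
    intro i j
    simp only [S9.hgf, hrdef]
    rw [EuclideanSpace.inner_single_left]
    simp [EuclideanSpace.single_apply, eq_comm]
  -- bounds helpers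
  have hA4 : (A^4)⁻¹ ≤ 1/A^2 := by
    rw [one_div]
    apply inv_anti₀ (by positivity)
    nlinarith [sq_nonneg (A - 2), sq_nonneg A, sq_nonneg (A^2 - 1)]
  refine ⟨?_, ?_, ?_, ?_, ?_, ?_, ?_, ?_, ?_⟩
  · rw [hBval, d1, h11]
    have : (0 * 0 + -(A/r))/A^2 = -(A*r)⁻¹ := by field_simp; ring
    rw [this]
    simp only [sub_self, abs_zero]
    positivity
  · rw [hBval, d2, h22]
    have : (-A * -A + 0)/A^2 = 1 := by field_simp; ring
    rw [this]
    simp only [sub_self, abs_zero]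
    positivity
  · intro i
    rw [hBval, dq, hqq, if_pos rfl]
    have : (A^2 * q i * (A^2 * q i) + A^2*1)/A^2 = A^2 * (q i)^2 + 1 := by field_simp
    rw [this]
    have h1 : |A^2 * (q i)^2 + 1 - 1| = A^2 * (q i)^2 := by
      rw [add_sub_cancel_right]
      exact abs_of_nonneg (by positivity)
    rw [h1]
    have h2 : (q i)^2 ≤ ((A^3)⁻¹)^2 := by
      have := hqi i
      nlinarith [abs_nonneg (q i), sq_abs (q i)]
    have h3 : A^2 * ((A^3)⁻¹)^2 = (A^4)⁻¹ := by field_simp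
    calc A^2 * (q i)^2 ≤ A^2 * ((A^3)⁻¹)^2 := by nlinarith
      _ = (A^4)⁻¹ := h3
      _ ≤ 1/A^2 := hA4
  · rw [hBval, d1, h12]
    simp only [zero_mul, add_zero, zero_div, abs_zero]
    positivity
  · intro i
    rw [hBval, d1, h1q]
    simp only [zero_mul, add_zero, zero_div, abs_zero]
    positivity
  · intro i
    rw [hBval, d2, dq, h2q]
    have : (-A * (A^2 * q i) + 0)/A^2 = -(A * q i) := by field_simp; ring
    rw [this, abs_neg, abs_mul, abs_of_pos hApos]
    calc A * |q i| ≤ A * (A^3)⁻¹ := mul_le_mul_of_nonneg_left (hqi i) hApos.le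
      _ = (A^2)⁻¹ := by field_simp
      _ = 1/A^2 := by rw [one_div]
  · intro i j hij
    rw [hBval, dq, dq, hqq]
    rw [if_neg hij]
    have : (A^2 * q i * (A^2 * q j) + A^2 * 0)/A^2 = A^2 * (q i * q j) := by field_simp; ring
    rw [this, abs_mul, abs_mul, abs_of_nonneg (by positivity : (0:ℝ) ≤ A^2)]
    calc A^2 * (|q i| * |q j|) ≤ A^2 * ((A^3)⁻¹ * (A^3)⁻¹) := by
          have h1 := hqi i; have h2 := hqi j
          have := abs_nonneg (q i); have := abs_nonneg (q j)
          have hinv : (0:ℝ) ≤ (A^3)⁻¹ := by positivity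
          have hstep : |q i| * |q j| ≤ (A^3)⁻¹ * (A^3)⁻¹ :=
            mul_le_mul h1 h2 (abs_nonneg _) hinv
          nlinarith [hstep]
      _ = (A^4)⁻¹ := by field_simp
      _ ≤ 1/A^2 := hA4
  · rw [hBval, d1, h11]
    have : (0 * 0 + -(A/r))/A^2 = -(A*r)⁻¹ := by field_simp; ring
    rw [this]
    rw [neg_lt, neg_zero]
    positivity
  · intro a b hab
    have hv11 : ((a • (((p.1 / r, p.2 / r), 0) : S9.X m)
        + ∑ i, b i • (((0, 0), EuclideanSpace.single i 1) : S9.X m))).1.1 = a * (p.1 / r) := by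
      simp [Prod.fst_sum, Prod.smul_fst, smul_eq_mul]
    have hv12 : ((a • (((p.1 / r, p.2 / r), 0) : S9.X m)
        + ∑ i, b i • (((0, 0), EuclideanSpace.single i 1) : S9.X m))).1.2 = a * (p.2 / r) := by
      simp [Prod.fst_sum, Prod.smul_fst, smul_eq_mul]
    have hv2 : ((a • (((p.1 / r, p.2 / r), 0) : S9.X m)
        + ∑ i, b i • (((0, 0), EuclideanSpace.single i 1) : S9.X m))).2
        = ∑ i, b i • EuclideanSpace.single i (1:ℝ) := by
      simp [Prod.snd_sum, Prod.smul_snd]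
    set v : S9.X m := a • (((p.1 / r, p.2 / r), 0) : S9.X m)
        + ∑ i, b i • (((0, 0), EuclideanSpace.single i 1) : S9.X m) with hvdef
    have hv2c : ∀ j, v.2 j = b j := by
      intro j; rw [hv2]; exact S9.sum_single_apply b j
    have hT : (inner ℝ v.2 v.2 : ℝ) = ∑ i, b i ^ 2 := by
      rw [PiLp.inner_apply]
      simp only [RCLike.inner_apply, conj_trivial, hv2c]
      exact Finset.sum_congr rfl (fun j _ => (sq (b j)).symm ▸ by ring)
    have hT0 : (0:ℝ) ≤ (inner ℝ v.2 v.2 : ℝ) := real_inner_self_nonneg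
    have hTle : (inner ℝ v.2 v.2 : ℝ) ≤ 1 := by
      rw [hT]; nlinarith [sq_nonneg a]
    have hnv : ‖v.2‖ ≤ 1 := by
      have h1 : ‖v.2‖^2 = (inner ℝ v.2 v.2 : ℝ) := (real_inner_self_eq_norm_sq v.2).symm
      nlinarith [norm_nonneg v.2]
    have hS : |(inner ℝ q v.2 : ℝ)| ≤ (A^3)⁻¹ := by
      calc |(inner ℝ q v.2 : ℝ)| ≤ ‖q‖ * ‖v.2‖ := abs_real_inner_le_norm q v.2
        _ ≤ (A^3)⁻¹ * 1 := mul_le_mul hq' hnv (norm_nonneg _) (by positivity)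
        _ = (A^3)⁻¹ := mul_one _
    have hdgv : S9.dgf m A (p,q) v = A^2 * (inner ℝ q v.2 : ℝ) - A * a := by
      simp only [S9.dgf, hrdef, hv11, hv12]
      have : p.1 * (a * (p.1/r)) + p.2 * (a * (p.2/r)) = a * r := by
        field_simp
        linear_combination -a * hrr
      rw [this]
      field_simp
    have hhgv : S9.hgf m A (p,q) v v = A^2 * (inner ℝ v.2 v.2 : ℝ) := by
      simp only [S9.hgf, hrdef, hv11, hv12]
      have h1 : a * (p.1/r) * (a * (p.1/r)) + a * (p.2/r) * (a * (p.2/r)) = a^2 := by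
        field_simp
        linear_combination -a^2 * hrr
      have h2 : p.1 * (a * (p.1/r)) + p.2 * (a * (p.2/r)) = a * r := by
        field_simp
        linear_combination -a * hrr
      rw [h1, h2]
      field_simp
      ring
    have hBvv : (A ^ 2 * etaA m A ((p,q) : S9.X m))⁻¹ * D2 m (etaA m A) (p,q) v v
        = (A * (inner ℝ q v.2 : ℝ) - a)^2 + (inner ℝ v.2 v.2 : ℝ) := by
      rw [hBval, hdgv, hhgv]
      field_simp
    have habT : a^2 + (inner ℝ v.2 v.2 : ℝ) = 1 := by rw [hT]; exact hab
    have hAS : |A * (inner ℝ q v.2 : ℝ)| ≤ 1/4 := by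
      rw [abs_mul, abs_of_pos hApos]
      calc A * |(inner ℝ q v.2 : ℝ)| ≤ A * (A^3)⁻¹ := mul_le_mul_of_nonneg_left hS hApos.le
        _ = (A^2)⁻¹ := by field_simp
        _ ≤ 1/4 := by
            rw [show (1:ℝ)/4 = ((4:ℝ))⁻¹ by norm_num]
            apply inv_anti₀ (by norm_num)
            nlinarith [sq_nonneg (A - 2)]
    obtain ⟨hAS1, hAS2⟩ := abs_le.mp hAS
    have hlow : 1/2 ≤ (A * (inner ℝ q v.2 : ℝ) - a)^2 + (inner ℝ v.2 v.2 : ℝ) := by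
      nlinarith [sq_nonneg (2 * (A * (inner ℝ q v.2 : ℝ)) - a/2), hT0, habT, hAS1, hAS2]
    constructor
    · rw [hBvv]; linarith
    · rw [hBvv, hBval, d1, h11]
      have hB11 : (0 * 0 + -(A/r))/A^2 = -(A*r)⁻¹ := by field_simp; ring
      rw [hB11]
      have hAr : (A*r)⁻¹ ≤ lam/2 := by
        have h2lam : 2/lam ≤ A*r := by
          calc 2/lam = (8/(lam*ε₁))*(ε₁/4) := by field_simp; ring
            _ ≤ A * r := by
                apply mul_le_mul hA8 hrge (by positivity) hApos.le
        rw [show lam/2 = (2/lam)⁻¹ by field_simp]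
        exact inv_anti₀ (by positivity) h2lam
      have hmul := mul_le_mul_of_nonneg_left hlow hlam.le
      nlinarith [hAr, hmul]
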